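/- Let d be an odd integer with d > 3 and let P ∈ F_2[x,y,z] be the homogeneous polynomial of degree d − 3 with (x+y)(x+z)(y+z)·P(x,y,z) = x^d + y^d + z^d + (x+y+z)^d. Then P(x,y,z) and P(x,y,t), viewed as homogeneous polynomials in F̄_2[x,y,z,t] (F̄_2 the algebraic closure of F_2), have no common non-unit divisor; equivalently, the projective cones P(x,y,z) = 0 and P(x,y,t) = 0 in P³(F̄_2) share no irreducible component, so their intersection is a projective curve. -/

import Mathlib

open MvPolynomial

section Aux

variable {R : Type*} [CommRing R]

/-- Coefficients of powers of `X 0 + X 1` vanish on monomials involving the third variable. -/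
private lemma aux_coeff_pow_add (k : ℕ) (μ : Fin 3 →₀ ℕ) (hμ : μ 2 ≠ 0) :
    coeff μ ((X 0 + X 1 : MvPolynomial (Fin 3) (ZMod 2)) ^ k) = 0 := by
  rw [add_pow, coeff_sum]
  refine Finset.sum_eq_zero fun j hj => ?_
  rw [show ((k.choose j : ℕ) : MvPolynomial (Fin 3) (ZMod 2))
      = C ((k.choose j : ℕ) : ZMod 2) from (map_natCast C _).symm,
    X_pow_eq_monomial, X_pow_eq_monomial, monomial_mul, C_apply, monomial_mul,
    coeff_monomial, if_neg, ]
  intro h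
  apply hμ
  rw [← h]
  simp [Finsupp.single_apply]

private lemma aux_degreeOf_le_of_dvd_zero [IsDomain R] {n : ℕ}
    {p q : MvPolynomial (Fin (n + 1)) R} (h : p ∣ q) (hq : q ≠ 0) :
    degreeOf 0 p ≤ degreeOf 0 q := by
  obtain ⟨r, rfl⟩ := h
  have hp : p ≠ 0 := left_ne_zero_of_mul hq
  have hr : r ≠ 0 := right_ne_zero_of_mul hq
  rw [← natDegree_finSuccEquiv, ← natDegree_finSuccEquiv, map_mul,
    Polynomial.natDegree_mul
      ((map_ne_zero_iff _ (AlgEquiv.injective _)).2 hp)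
      ((map_ne_zero_iff _ (AlgEquiv.injective _)).2 hr)]
  exact Nat.le_add_right _ _

private lemma aux_degreeOf_le_of_dvd [IsDomain R] {n : ℕ}
    {p q : MvPolynomial (Fin (n + 1)) R} (i : Fin (n + 1)) (h : p ∣ q) (hq : q ≠ 0) :
    degreeOf i p ≤ degreeOf i q := by
  have key : ∀ r : MvPolynomial (Fin (n + 1)) R,
      degreeOf i r = degreeOf 0 (rename (⇑(Equiv.swap i 0)) r) := by
    intro r
    have h' := degreeOf_rename_of_injective (p := r) (Equiv.swap i (0 : Fin (n + 1))).injective i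
    rw [Equiv.swap_apply_left] at h'
    exact h'.symm
  rw [key p, key q]
  refine aux_degreeOf_le_of_dvd_zero (map_dvd (rename (⇑(Equiv.swap i 0))) h) ?_
  intro h0
  exact hq (rename_injective _ (Equiv.swap i 0).injective (by simpa using h0))

private lemma aux_degreeOf_rename_eq_zero {σ τ : Type*} [DecidableEq τ] (f : σ → τ)
    (p : MvPolynomial σ R) (i : τ) (hi : ∀ j, f j ≠ i) :
    degreeOf i (rename f p) = 0 := by
  rw [← Nat.le_zero, degreeOf_le_iff]
  intro m hm
  by_contra hmi
  have h1 : i ∈ (rename f p).vars := by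
    rw [mem_vars]
    exact ⟨m, hm, Finsupp.mem_support_iff.2 (by omega)⟩
  have h2 := vars_rename f p h1
  simp only [Finset.mem_image] at h2
  obtain ⟨j, -, hj⟩ := h2
  exact hi j hj

/-- The key coefficient computation: the coefficient of `z^(d-3)` in `P` is `1`. -/
private lemma aux_key_coeff (d : ℕ) (hodd : Odd d) (hd : 3 < d)
    (P : MvPolynomial (Fin 3) (ZMod 2))
    (hP : ((X 0 + X 1) * (X 0 + X 2) * (X 1 + X 2) : MvPolynomial (Fin 3) (ZMod 2)) * P =
      X 0 ^ d + X 1 ^ d + X 2 ^ d + (X 0 + X 1 + X 2) ^ d) :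
    coeff (Finsupp.single 2 (d - 3)) P = 1 := by
  classical
  have hd2 : ((d : ZMod 2)) = 1 := by
    obtain ⟨e, rfl⟩ := hodd
    push_cast
    rw [show ((2 : ZMod 2)) = 0 from rfl]
    ring
  set m : Fin 3 →₀ ℕ := Finsupp.single 0 1 + Finsupp.single 2 (d - 1) with hmdef
  have hm0 : m 0 = 1 := by simp [hmdef, Finsupp.single_apply]
  have hm1 : m 1 = 0 := by simp [hmdef, Finsupp.single_apply]
  have hm2 : m 2 = d - 1 := by simp [hmdef, Finsupp.single_apply]
  -- Expand the cubic into monomials (char 2).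
  have h2 : (2 : MvPolynomial (Fin 3) (ZMod 2)) = 0 := by
    rw [← map_ofNat (C : ZMod 2 →+* MvPolynomial (Fin 3) (ZMod 2)) 2,
      show (OfNat.ofNat 2 : ZMod 2) = 0 from rfl, map_zero]
  have hM : ∀ (i j : Fin 3) (a b : ℕ),
      (monomial (Finsupp.single i a + Finsupp.single j b) (1 : ZMod 2)) = X i ^ a * X j ^ b := by
    intro i j a b
    rw [X_pow_eq_monomial, X_pow_eq_monomial, monomial_mul, one_mul]
  have hE : ((X 0 + X 1) * (X 0 + X 2) * (X 1 + X 2) : MvPolynomial (Fin 3) (ZMod 2))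
      = monomial (Finsupp.single 0 2 + Finsupp.single 1 1) 1
      + monomial (Finsupp.single 0 2 + Finsupp.single 2 1) 1
      + monomial (Finsupp.single 0 1 + Finsupp.single 1 2) 1
      + monomial (Finsupp.single 1 2 + Finsupp.single 2 1) 1
      + monomial (Finsupp.single 0 1 + Finsupp.single 2 2) 1
      + monomial (Finsupp.single 1 1 + Finsupp.single 2 2) 1 := by
    rw [hM 0 1 2 1, hM 0 2 2 1, hM 0 1 1 2, hM 1 2 2 1, hM 0 2 1 2, hM 1 2 1 2]
    linear_combination (X 0 * X 1 * X 2 : MvPolynomial (Fin 3) (ZMod 2)) * h2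
  -- LHS coefficient
  have key1 : coeff m (((X 0 + X 1) * (X 0 + X 2) * (X 1 + X 2) :
      MvPolynomial (Fin 3) (ZMod 2)) * P) = coeff (Finsupp.single 2 (d - 3)) P := by
    have n1 : ¬ (Finsupp.single (0 : Fin 3) 2 + Finsupp.single 1 1 ≤ m) := by
      intro hle
      have h := Finsupp.le_def.mp hle 0
      simp [Finsupp.single_apply, hm0] at h
    have n2 : ¬ (Finsupp.single (0 : Fin 3) 2 + Finsupp.single 2 1 ≤ m) := by
      intro hle
      have h := Finsupp.le_def.mp hle 0
      simp [Finsupp.single_apply, hm0] at h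
    have n3 : ¬ (Finsupp.single (0 : Fin 3) 1 + Finsupp.single 1 2 ≤ m) := by
      intro hle
      have h := Finsupp.le_def.mp hle 1
      simp [Finsupp.single_apply, hm1] at h
    have n4 : ¬ (Finsupp.single (1 : Fin 3) 2 + Finsupp.single 2 1 ≤ m) := by
      intro hle
      have h := Finsupp.le_def.mp hle 1
      simp [Finsupp.single_apply, hm1] at h
    have n6 : ¬ (Finsupp.single (1 : Fin 3) 1 + Finsupp.single 2 2 ≤ m) := by
      intro hle
      have h := Finsupp.le_def.mp hle 1
      simp [Finsupp.single_apply, hm1] at h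
    have y5 : (Finsupp.single (0 : Fin 3) 1 + Finsupp.single 2 2 ≤ m) := by
      rw [Finsupp.le_def]
      intro a
      fin_cases a <;>
        simp [hmdef, Finsupp.single_apply] <;> omega
    have s5 : m - (Finsupp.single (0 : Fin 3) 1 + Finsupp.single 2 2)
        = Finsupp.single 2 (d - 3) := by
      ext a
      fin_cases a <;>
        simp [hmdef, Finsupp.tsub_apply, Finsupp.single_apply] <;> omega
    rw [hE, add_mul, add_mul, add_mul, add_mul, add_mul,
      coeff_add, coeff_add, coeff_add, coeff_add, coeff_add,
      coeff_monomial_mul', coeff_monomial_mul', coeff_monomial_mul',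
      coeff_monomial_mul', coeff_monomial_mul', coeff_monomial_mul',
      if_neg n1, if_neg n2, if_neg n3, if_neg n4, if_pos y5, if_neg n6, s5, one_mul]
    ring
  -- RHS coefficient
  have key2 : coeff m ((X 0 : MvPolynomial (Fin 3) (ZMod 2)) ^ d + X 1 ^ d + X 2 ^ d
      + (X 0 + X 1 + X 2) ^ d) = 1 := by
    have c1 : coeff m ((X (0 : Fin 3) : MvPolynomial (Fin 3) (ZMod 2)) ^ d) = 0 := by
      rw [X_pow_eq_monomial, coeff_monomial, if_neg]
      intro h
      have := DFunLike.congr_fun h 2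
      simp only [Finsupp.single_apply, hm2] at this
      simp at this
      omega
    have c2 : coeff m ((X (1 : Fin 3) : MvPolynomial (Fin 3) (ZMod 2)) ^ d) = 0 := by
      rw [X_pow_eq_monomial, coeff_monomial, if_neg]
      intro h
      have := DFunLike.congr_fun h 0
      simp only [Finsupp.single_apply, hm0] at this
      simp at this
    have c3 : coeff m ((X (2 : Fin 3) : MvPolynomial (Fin 3) (ZMod 2)) ^ d) = 0 := by
      rw [X_pow_eq_monomial, coeff_monomial, if_neg]
      intro h
      have := DFunLike.congr_fun h 0
      simp only [Finsupp.single_apply, hm0] at this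
      simp at this
    have c4 : coeff m (((X 0 + X 1) + X 2 : MvPolynomial (Fin 3) (ZMod 2)) ^ d) = 1 := by
      rw [add_pow, coeff_sum, Finset.sum_eq_single 1]
      · rw [pow_one, Nat.choose_one_right,
          show ((d : ℕ) : MvPolynomial (Fin 3) (ZMod 2)) = C ((d : ℕ) : ZMod 2) from
            (map_natCast C _).symm,
          X_pow_eq_monomial, mul_assoc, C_apply, monomial_mul, one_mul, add_zero,
          coeff_mul_monomial']
        have y : Finsupp.single (2 : Fin 3) (d - 1) ≤ m := by
          rw [Finsupp.le_def]
          intro a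
          fin_cases a <;> simp [hmdef, Finsupp.single_apply]
        rw [if_pos y]
        have s : m - Finsupp.single (2 : Fin 3) (d - 1) = Finsupp.single 0 1 := by
          ext a
          fin_cases a <;>
            simp [hmdef, Finsupp.tsub_apply, Finsupp.single_apply] <;> omega
        rw [s, coeff_add, coeff_X_same, coeff_X, if_neg, hd2]
        · ring
        · intro h
          have := DFunLike.congr_fun h 0
          simp [Finsupp.single_apply] at this
      · intro k hk hk1
        rw [show ((d.choose k : ℕ) : MvPolynomial (Fin 3) (ZMod 2))
            = C ((d.choose k : ℕ) : ZMod 2) from (map_natCast C _).symm,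
          X_pow_eq_monomial, mul_assoc, C_apply, monomial_mul, one_mul, add_zero,
          coeff_mul_monomial']
        by_cases hk0 : k = 0
        · subst hk0
          rw [if_neg]
          intro hle
          have h := Finsupp.le_def.mp hle 2
          simp only [Finsupp.single_apply, hm2] at h
          simp at h
          omega
        · have hkd : k ≤ d := by
            simpa using Nat.lt_succ_iff.mp (Finset.mem_range.mp hk)
          split_ifs with hle
          · rw [aux_coeff_pow_add, zero_mul]
            rw [Finsupp.tsub_apply, Finsupp.single_apply, hm2]
            simp only [if_pos rfl, if_true]
            omega
          · rfl
      · intro h1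
        exact absurd (Finset.mem_range.2 (by omega)) h1
    rw [coeff_add, coeff_add, coeff_add, c1, c2, c3, c4]
    ring
  rw [← key1, hP, key2]

end Aux

/-- For odd `d > 3`, the homogeneous quotient polynomial `P` of degree `d - 3` with
`(x+y)(x+z)(y+z)·P = x^d + y^d + z^d + (x+y+z)^d` over `F₂` is such that `P(x,y,z)` and
`P(x,y,t)`, viewed in four variables over the algebraic closure of `F₂`, have no common
non-unit divisor: the projective cones `P(x,y,z) = 0` and `P(x,y,t) = 0` in `P³` share no
irreducible component. -/
theorem stmt_17 (d : ℕ) (hodd : Odd d) (hd : 3 < d)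
    (P : MvPolynomial (Fin 3) (ZMod 2))
    (hhom : P.IsHomogeneous (d - 3))
    (hP : ((X 0 + X 1) * (X 0 + X 2) * (X 1 + X 2) : MvPolynomial (Fin 3) (ZMod 2)) * P =
      X 0 ^ d + X 1 ^ d + X 2 ^ d + (X 0 + X 1 + X 2) ^ d) :
    ∀ g : MvPolynomial (Fin 4) (AlgebraicClosure (ZMod 2)),
      g ∣ rename (![0, 1, 2] : Fin 3 → Fin 4)
            (P.map (algebraMap (ZMod 2) (AlgebraicClosure (ZMod 2)))) →
      g ∣ rename (![0, 1, 3] : Fin 3 → Fin 4)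
            (P.map (algebraMap (ZMod 2) (AlgebraicClosure (ZMod 2)))) →
      IsUnit g := by
  classical
  set K := AlgebraicClosure (ZMod 2)
  intro g hgA hgB
  set P' : MvPolynomial (Fin 3) K := P.map (algebraMap (ZMod 2) K) with hP'def
  -- the key coefficient fact
  have hc : coeff (Finsupp.single 2 (d - 3)) P = 1 := aux_key_coeff d hodd hd P hP
  have hc' : coeff (Finsupp.single 2 (d - 3)) P' = 1 := by
    rw [hP'def, coeff_map, hc, map_one]
  have hP'ne : P' ≠ 0 := by
    intro h
    rw [h, coeff_zero] at hc'
    exact zero_ne_one hc'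
  have hinj012 : Function.Injective (![0, 1, 2] : Fin 3 → Fin 4) := by decide
  have hinj013 : Function.Injective (![0, 1, 3] : Fin 3 → Fin 4) := by decide
  have hAne : rename (![0, 1, 2] : Fin 3 → Fin 4) P' ≠ 0 := fun h =>
    hP'ne (rename_injective _ hinj012 (by rw [h, map_zero]))
  have hBne : rename (![0, 1, 3] : Fin 3 → Fin 4) P' ≠ 0 := fun h =>
    hP'ne (rename_injective _ hinj013 (by rw [h, map_zero]))
  -- g involves neither the variable 2 nor the variable 3
  have h3g : degreeOf 3 g = 0 := by
    have := aux_degreeOf_le_of_dvd (n := 3) 3 hgA hAne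
    rwa [aux_degreeOf_rename_eq_zero _ _ _ (by decide), Nat.le_zero] at this
  have h2g : degreeOf 2 g = 0 := by
    have := aux_degreeOf_le_of_dvd (n := 3) 2 hgB hBne
    rwa [aux_degreeOf_rename_eq_zero _ _ _ (by decide), Nat.le_zero] at this
  have hvars : ↑g.vars ⊆ Set.range (![0, 1] : Fin 2 → Fin 4) := by
    intro i hi
    have hiv : i ∈ g.vars := hi
    rw [mem_vars] at hiv
    obtain ⟨mm, hmm, himm⟩ := hiv
    have hne : mm i ≠ 0 := Finsupp.mem_support_iff.1 himm
    have hle := monomial_le_degreeOf i hmm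
    have hi2 : i ≠ 2 := by rintro rfl; rw [h2g, Nat.le_zero] at hle; exact hne hle
    have hi3 : i ≠ 3 := by rintro rfl; rw [h3g, Nat.le_zero] at hle; exact hne hle
    have hv2 : i.val ≠ 2 := fun h => hi2 (Fin.ext h)
    have hv3 : i.val ≠ 3 := fun h => hi3 (Fin.ext h)
    have hv : i.val = 0 ∨ i.val = 1 := by omega
    rcases hv with h0 | h1
    · exact ⟨0, Fin.ext (by simp [h0])⟩
    · exact ⟨1, Fin.ext (by simp [h1])⟩
  have hinj01 : Function.Injective (![0, 1] : Fin 2 → Fin 4) := by decide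
  obtain ⟨g₀, rfl⟩ := exists_rename_eq_of_vars_subset_range g ![0, 1] hinj01 hvars
  -- collapse variable 3 onto variable 2
  have hcomp1 : (![0, 1, 2, 2] : Fin 4 → Fin 3) ∘ (![0, 1] : Fin 2 → Fin 4)
      = (![0, 1] : Fin 2 → Fin 3) := by
    funext j; fin_cases j <;> rfl
  have hcomp2 : (![0, 1, 2, 2] : Fin 4 → Fin 3) ∘ (![0, 1, 3] : Fin 3 → Fin 4) = id := by
    funext j; fin_cases j <;> rfl
  have hq : (rename (![0, 1] : Fin 2 → Fin 3) g₀) ∣ P' := by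
    have := map_dvd (rename (![0, 1, 2, 2] : Fin 4 → Fin 3)) hgB
    rwa [rename_rename, rename_rename, hcomp1, hcomp2, rename_id] at this
  -- move variable 2 to position 0 and use `finSuccEquiv`
  set sw : Fin 3 → Fin 3 := ⇑(Equiv.swap (0 : Fin 3) 2) with hswdef
  have hq2 : (rename sw (rename (![0, 1] : Fin 2 → Fin 3) g₀)) ∣ rename sw P' :=
    map_dvd _ hq
  rw [rename_rename] at hq2
  set q₂ : MvPolynomial (Fin 3) K := rename (sw ∘ ![0, 1]) g₀ with hq₂def
  set p₂ : MvPolynomial (Fin 3) K := rename sw P' with hp₂def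
  have hdeg0 : degreeOf 0 q₂ = 0 := by
    refine aux_degreeOf_rename_eq_zero _ _ _ ?_
    intro j
    fin_cases j <;> simp [hswdef, Equiv.swap_apply_def] <;> decide
  set e := finSuccEquiv K 2 with hedef
  have hnatdeg : (e q₂).natDegree = 0 := by
    rw [hedef, natDegree_finSuccEquiv]; exact hdeg0
  have hCq : e q₂ = Polynomial.C ((e q₂).coeff 0) :=
    Polynomial.eq_C_of_natDegree_eq_zero hnatdeg
  have hdvd : e q₂ ∣ e p₂ := map_dvd _ hq2
  -- the (d-3)-rd coefficient of `e p₂` is 1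
  have hp₂hom : p₂.IsHomogeneous (d - 3) := (hhom.map _).rename_isHomogeneous
  have hψ : ((e p₂).coeff (d - 3)).IsHomogeneous 0 :=
    MvPolynomial.IsHomogeneous.finSuccEquiv_coeff_isHomogeneous hp₂hom (d - 3) 0 (add_zero _)
  have hcons : (0 : Fin 2 →₀ ℕ).cons (d - 3) = Finsupp.single (0 : Fin 3) (d - 3) := by
    ext j
    refine Fin.cases ?_ ?_ j
    · simp
    · intro j'
      simp [Finsupp.single_apply, (Fin.succ_ne_zero j').symm]
  have hcoeff0 : coeff 0 ((e p₂).coeff (d - 3)) = 1 := by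
    rw [hedef, finSuccEquiv_coeff_coeff, hcons]
    have hcr := coeff_rename_mapDomain sw (Equiv.swap (0 : Fin 3) 2).injective P'
      (Finsupp.single 2 (d - 3))
    rw [Finsupp.mapDomain_single, hswdef, Equiv.swap_apply_right] at hcr
    rw [hp₂def, hswdef, hcr]
    exact hc'
  have hcoef : (e p₂).coeff (d - 3) = 1 := by
    have hψC : (e p₂).coeff (d - 3) = C (coeff 0 ((e p₂).coeff (d - 3))) := by
      ext μ
      rw [coeff_C]
      split_ifs with h0
      · rw [← h0]
      · exact hψ.coeff_eq_zero fun hdeg => h0 (((Finsupp.degree_eq_zero_iff μ).mp hdeg) ▸ rfl)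
    rw [hψC, hcoeff0, map_one]
  -- conclude: the constant `(e q₂).coeff 0` divides 1
  have hdvd1 : (e q₂).coeff 0 ∣ (1 : MvPolynomial (Fin 2) K) := by
    have := (Polynomial.C_dvd_iff_dvd_coeff ((e q₂).coeff 0) (e p₂)).1 (hCq ▸ hdvd) (d - 3)
    rwa [hcoef] at this
  have hunitc : IsUnit ((e q₂).coeff 0) := isUnit_of_dvd_one hdvd1
  have hunitq₂ : IsUnit q₂ := by
    have h1 : IsUnit (e q₂) := hCq ▸ (Polynomial.isUnit_C.2 hunitc)
    have h2 := h1.map e.symm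
    rwa [AlgEquiv.symm_apply_apply] at h2
  have hinjsw : Function.Injective (sw ∘ (![0, 1] : Fin 2 → Fin 3)) :=
    (Equiv.swap (0 : Fin 3) 2).injective.comp (show Function.Injective (![0, 1] : Fin 2 → Fin 3)
      by decide)
  have hunitg₀ : IsUnit g₀ := by
    have h3 := hunitq₂.map (killCompl hinjsw)
    rwa [hq₂def, killCompl_rename_app] at h3
  exact hunitg₀.map _
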